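/- Let I ∈ S_min. Then Σ_{L ∈ S_min, L ≠ I} μ(L)·T₁(sup(I, L))·T₂(sup(L, I)) = Σ_{L : I < L ≤ K} μ(L)·(1 − p_L⁻¹)·T₁(L)·T₂(L). -/

import Mathlib

open scoped Classical

/-- Two children (covers) of the same vertex that are comparable are equal. -/
private lemma cov_eq_of_le {S : Type*} [PartialOrder S] {J J' M : S}
    (hJ : J ⋖ M) (hJ' : J' ⋖ M) (h : J ≤ J') : J = J' :=
  h.eq_or_lt.elim id fun hlt => absurd hJ'.lt (hJ.2 hlt)

/-- Key lemma: the μ-mass of minimal elements below `M` equals `μ M`. -/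
private lemma sum_min_below {S : Type*} [Fintype S] [SemilatticeSup S]
    (hchain : ∀ x y z : S, x ≤ y → x ≤ z → y ≤ z ∨ z ≤ y)
    (p : S → ℕ) (hp : ∀ L : S, ¬ IsMin L → 2 ≤ p L)
    (hcard : ∀ L : S, ¬ IsMin L →
      (Finset.univ.filter (fun J : S => J ⋖ L)).card = p L)
    (μ : S → ℝ) (hμ : ∀ L J : S, J ⋖ L → μ J = μ L / p L) :
    ∀ M : S, ∑ L ∈ Finset.univ.filter (fun L : S => IsMin L ∧ L ≤ M), μ L = μ M := by
  intro M
  induction M using WellFoundedLT.induction with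
  | _ M ih =>
    by_cases hM : IsMin M
    · have : Finset.univ.filter (fun L : S => IsMin L ∧ L ≤ M) = {M} := by
        ext L
        simp only [Finset.mem_filter, Finset.mem_univ, true_and, Finset.mem_singleton]
        constructor
        · rintro ⟨hLmin, hLM⟩; exact le_antisymm hLM (hM hLM)
        · rintro rfl; exact ⟨hM, le_rfl⟩
      rw [this, Finset.sum_singleton]
    · have hset : Finset.univ.filter (fun L : S => IsMin L ∧ L ≤ M)
          = (Finset.univ.filter (fun J : S => J ⋖ M)).biUnion
            (fun J => Finset.univ.filter (fun L : S => IsMin L ∧ L ≤ J)) := by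
        ext L
        simp only [Finset.mem_filter, Finset.mem_univ, true_and, Finset.mem_biUnion]
        constructor
        · rintro ⟨hLmin, hLM⟩
          have hlt : L < M := lt_of_le_of_ne hLM (fun h => hM (h ▸ hLmin))
          obtain ⟨J, hLJ, hJM⟩ := exists_le_covBy_of_lt hlt
          exact ⟨J, hJM, hLmin, hLJ⟩
        · rintro ⟨J, hJM, hLmin, hLJ⟩
          exact ⟨hLmin, hLJ.trans hJM.le⟩
      have hdisj : ∀ J ∈ Finset.univ.filter (fun J : S => J ⋖ M),
          ∀ J' ∈ Finset.univ.filter (fun J : S => J ⋖ M), J ≠ J' →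
          Disjoint (Finset.univ.filter (fun L : S => IsMin L ∧ L ≤ J))
            (Finset.univ.filter (fun L : S => IsMin L ∧ L ≤ J')) := by
        intro J hJ J' hJ' hne
        simp only [Finset.mem_filter, Finset.mem_univ, true_and] at hJ hJ'
        rw [Finset.disjoint_left]
        rintro L hL hL'
        simp only [Finset.mem_filter, Finset.mem_univ, true_and] at hL hL'
        rcases hchain L J J' hL.2 hL'.2 with h | h
        · exact hne (cov_eq_of_le hJ hJ' h)
        · exact hne (cov_eq_of_le hJ hJ' ((cov_eq_of_le hJ' hJ h).symm.le))
      rw [hset, Finset.sum_biUnion hdisj]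
      have hsum : ∀ J ∈ Finset.univ.filter (fun J : S => J ⋖ M),
          (∑ L ∈ Finset.univ.filter (fun L : S => IsMin L ∧ L ≤ J), μ L) = μ M / p M := by
        intro J hJ
        simp only [Finset.mem_filter, Finset.mem_univ, true_and] at hJ
        rw [ih J hJ.lt, hμ M J hJ]
      rw [Finset.sum_congr rfl hsum, Finset.sum_const, hcard M hM, nsmul_eq_mul]
      have hppos : (0:ℝ) < (p M : ℝ) := by
        have := hp M hM; positivity
      field_simp

/-- Fiber lemma: the μ-mass of minimal `L ≠ I` with `I ⊔ L = M` is `μ M (1 - 1/p M)`. -/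
private lemma sum_fiber {S : Type*} [Fintype S] [SemilatticeSup S]
    (hchain : ∀ x y z : S, x ≤ y → x ≤ z → y ≤ z ∨ z ≤ y)
    (p : S → ℕ) (hp : ∀ L : S, ¬ IsMin L → 2 ≤ p L)
    (hcard : ∀ L : S, ¬ IsMin L →
      (Finset.univ.filter (fun J : S => J ⋖ L)).card = p L)
    (μ : S → ℝ) (hμ : ∀ L J : S, J ⋖ L → μ J = μ L / p L)
    (I : S) (hI : IsMin I) (M : S) (hIM : I < M) :
    ∑ L ∈ Finset.univ.filter (fun L : S => (IsMin L ∧ L ≠ I) ∧ I ⊔ L = M), μ L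
      = μ M * (1 - (p M : ℝ)⁻¹) := by
  have hM : ¬ IsMin M := fun h => absurd hIM (h.not_lt)
  obtain ⟨J₀, hIJ₀, hJ₀M⟩ := exists_le_covBy_of_lt hIM
  have hsub : Finset.univ.filter (fun L : S => IsMin L ∧ L ≤ J₀)
      ⊆ Finset.univ.filter (fun L : S => IsMin L ∧ L ≤ M) := by
    intro L hL
    simp only [Finset.mem_filter, Finset.mem_univ, true_and] at hL ⊢
    exact ⟨hL.1, hL.2.trans hJ₀M.le⟩
  have hset : Finset.univ.filter (fun L : S => (IsMin L ∧ L ≠ I) ∧ I ⊔ L = M)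
      = Finset.univ.filter (fun L : S => IsMin L ∧ L ≤ M)
        \ Finset.univ.filter (fun L : S => IsMin L ∧ L ≤ J₀) := by
    ext L
    simp only [Finset.mem_sdiff, Finset.mem_filter, Finset.mem_univ, true_and, not_and]
    constructor
    · rintro ⟨⟨hLmin, hLI⟩, hsup⟩
      refine ⟨⟨hLmin, le_sup_right.trans hsup.le⟩, fun _ hLJ₀ => ?_⟩
      have : I ⊔ L ≤ J₀ := sup_le hIJ₀ hLJ₀
      exact absurd (hsup ▸ this) (fun h => lt_irrefl _ (hJ₀M.lt.trans_le h))
    · rintro ⟨⟨hLmin, hLM⟩, hnle⟩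
      have hLJ₀ : ¬ L ≤ J₀ := hnle hLmin
      have hLI : L ≠ I := fun h => hLJ₀ (h ▸ hIJ₀)
      refine ⟨⟨hLmin, hLI⟩, ?_⟩
      rcases hchain I J₀ (I ⊔ L) hIJ₀ le_sup_left with h | h
      · rcases h.eq_or_lt with h | h
        · exact absurd (h ▸ le_sup_right) hLJ₀
        · exact ((sup_le hIM.le hLM).lt_or_eq).resolve_left (hJ₀M.2 h)
      · exact absurd (le_sup_right.trans h) hLJ₀
  rw [hset, Finset.sum_sdiff_eq_sub hsub,
      sum_min_below hchain p hp hcard μ hμ, sum_min_below hchain p hp hcard μ hμ,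
    hμ M J₀ hJ₀M]
  have hppos : (0:ℝ) < (p M : ℝ) := by have := hp M hM; positivity
  field_simp

/-- In a finite directed tree `S` (finite partial order with greatest element `K`,
binary suprema, totally ordered up-sets), where every non-minimal vertex `L`
has exactly `p L ≥ 2` children and the weight `μ` satisfies `μ K > 0` and
`μ J = μ L / p L` for every child `J` of `L`, and `T₁, T₂ : S → ℝ` are
arbitrary: for `I ∈ S_min`,
`Σ_{L ∈ S_min, L ≠ I} μ(L) T₁(sup(I,L)) T₂(sup(L,I))
  = Σ_{L : I < L ≤ K} μ(L) (1 − p_L⁻¹) T₁(L) T₂(L)`. -/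
theorem product_replica_matrices_diagonal
    {S : Type*} [Fintype S] [SemilatticeSup S]
    (K : S) (hK : ∀ x : S, x ≤ K)
    (hchain : ∀ x y z : S, x ≤ y → x ≤ z → y ≤ z ∨ z ≤ y)
    (p : S → ℕ) (hp : ∀ L : S, ¬ IsMin L → 2 ≤ p L)
    (hcard : ∀ L : S, ¬ IsMin L →
      (Finset.univ.filter (fun J : S => J ⋖ L)).card = p L)
    (μ : S → ℝ) (hμK : 0 < μ K)
    (hμ : ∀ L J : S, J ⋖ L → μ J = μ L / p L)
    (T₁ T₂ : S → ℝ)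
    (I : S) (hI : IsMin I) :
    ∑ L ∈ Finset.univ.filter (fun L : S => IsMin L ∧ L ≠ I),
        μ L * T₁ (I ⊔ L) * T₂ (L ⊔ I) =
      ∑ L ∈ Finset.univ.filter (fun L : S => I < L ∧ L ≤ K),
        μ L * (1 - (p L : ℝ)⁻¹) * T₁ L * T₂ L := by
  have hmaps : ∀ L ∈ Finset.univ.filter (fun L : S => IsMin L ∧ L ≠ I),
      (fun L : S => I ⊔ L) L ∈ Finset.univ.filter (fun M : S => I < M ∧ M ≤ K) := by
    intro L hL
    simp only [Finset.mem_filter, Finset.mem_univ, true_and] at hL ⊢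
    refine ⟨lt_of_le_of_ne le_sup_left fun h => ?_, hK _⟩
    exact hL.2 (le_antisymm (h ▸ le_sup_right : L ≤ I) (hI (h ▸ le_sup_right)))
  rw [← Finset.sum_fiberwise_of_maps_to hmaps]
  refine Finset.sum_congr rfl fun M hM => ?_
  simp only [Finset.mem_filter, Finset.mem_univ, true_and] at hM
  rw [Finset.filter_filter]
  have hterm : ∀ L ∈ Finset.univ.filter
      (fun L : S => (IsMin L ∧ L ≠ I) ∧ I ⊔ L = M),
      μ L * T₁ (I ⊔ L) * T₂ (L ⊔ I) = μ L * (T₁ M * T₂ M) := by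
    intro L hL
    simp only [Finset.mem_filter, Finset.mem_univ, true_and] at hL
    rw [hL.2, sup_comm L I, hL.2]; ring
  rw [Finset.sum_congr rfl hterm, ← Finset.sum_mul,
    sum_fiber hchain p hp hcard μ hμ I hI M hM.1]
  ring
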